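/- Let a ∈ ℝ and let q : ℤ² → ℝ³ satisfy, for all (u,v) ∈ ℤ²: q₁₁(u,v) = a·q₂(u,v), q₂₂(u,v) = 0, q₁₂(u,v) = (0,0,1), together with the initial conditions q(0,0) = (0,0,0), q(0,1) = (0,1,0), q(1,0) = (1,0,0). Then q(u,v) = (u, v + a·u(u−1)/2, u·v + a·u(u²−1)/6) for all (u,v) ∈ ℤ² (the discrete Cayley surface). -/

import Mathlib

noncomputable section

abbrev R3 : Type := ℝ × ℝ × ℝ
abbrev R2 : Type := ℝ × ℝ

/-- Determinant of the 3×3 matrix with columns `a`, `b`, `c`. -/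
def det3 (a b c : R3) : ℝ :=
  a.1 * (b.2.1 * c.2.2 - b.2.2 * c.2.1)
    - b.1 * (a.2.1 * c.2.2 - a.2.2 * c.2.1)
    + c.1 * (a.2.1 * b.2.2 - a.2.2 * b.2.1)

/-- Determinant of the 2×2 matrix with columns `a`, `b`. -/
def det2 (a b : R2) : ℝ := a.1 * b.2 - a.2 * b.1

def e3 : R3 := ((0 : ℝ), (0 : ℝ), (1 : ℝ))

/-- First discrete partial derivative `q₁`. -/
def D1 (q : ℤ → ℤ → R3) (u v : ℤ) : R3 := q (u + 1) v - q u v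

/-- Second discrete partial derivative `q₂`. -/
def D2 (q : ℤ → ℤ → R3) (u v : ℤ) : R3 := q u (v + 1) - q u v

/-- Mixed discrete second derivative `q₁₂`. -/
def D12 (q : ℤ → ℤ → R3) (u v : ℤ) : R3 :=
  q (u + 1) (v + 1) - q (u + 1) v - q u (v + 1) + q u v

/-- Discrete second derivative `q₁₁`. -/
def D11 (q : ℤ → ℤ → R3) (u v : ℤ) : R3 := q (u + 1) v - (2 : ℝ) • q u v + q (u - 1) v

/-- Discrete second derivative `q₂₂`. -/
def D22 (q : ℤ → ℤ → R3) (u v : ℤ) : R3 := q u (v + 1) - (2 : ℝ) • q u v + q u (v - 1)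

/-- The discrete affine metric `Ω(u,v) = [q₁(u,v), q₂(u,v), ξ]`. -/
def Omega (q : ℤ → ℤ → R3) (ξ : R3) (u v : ℤ) : ℝ := det3 (D1 q u v) (D2 q u v) ξ

/-- Cubic form coefficient `A(u,v) = [q₁(u−1,v), q₁(u,v), ξ]`. -/
def Acoef (q : ℤ → ℤ → R3) (ξ : R3) (u v : ℤ) : ℝ := det3 (D1 q (u - 1) v) (D1 q u v) ξ

/-- Cubic form coefficient `B(u,v) = [q₂(u,v), q₂(u,v−1), ξ]`. -/
def Bcoef (q : ℤ → ℤ → R3) (ξ : R3) (u v : ℤ) : ℝ := det3 (D2 q u v) (D2 q u (v - 1)) ξ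

/-- `q` is a discrete improper indefinite affine sphere with affine normal `ξ`. -/
def IsDIIAS (q : ℤ → ℤ → R3) (ξ : R3) : Prop :=
  ∀ u v : ℤ,
    D12 q u v = Omega q ξ u v • ξ ∧
    0 < Omega q ξ u v ∧
    D1 q (u - 1) v ∈ Submodule.span ℝ {D1 q u v, D2 q u v} ∧
    D2 q u (v - 1) ∈ Submodule.span ℝ {D1 q u v, D2 q u v}

/-- `x(u,v) = ½(α(u)+β(v))`. -/
def xcc (α β : ℤ → R2) (u v : ℤ) : R2 := (1 / 2 : ℝ) • (α u + β v)

/-- `y(u,v) = ½(β(v)−α(u))`. -/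
def ycc (α β : ℤ → R2) (u v : ℤ) : R2 := (1 / 2 : ℝ) • (β v - α u)

/-- `z` satisfies the discrete centre-chord equations for the pair `(α,β)`. -/
def IsCentreChordZ (α β : ℤ → R2) (z : ℤ → ℤ → ℝ) : Prop :=
  ∀ u v : ℤ,
    z (u + 1) v - z u v = det2 (xcc α β (u + 1) v - xcc α β u v) (ycc α β u v) ∧
    z u (v + 1) - z u v = det2 (xcc α β u (v + 1) - xcc α β u v) (ycc α β u v)

/-- The centre-chord net `q(u,v) = (x(u,v), z(u,v))`. -/
def ccq (α β : ℤ → R2) (z : ℤ → ℤ → ℝ) (u v : ℤ) : R3 :=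
  ((xcc α β u v).1, (xcc α β u v).2, z u v)

/-- `Ω(u,v) = ¼ det(α₁(u), β₂(v))` of the centre-chord construction. -/
def OmegaCC (α β : ℤ → R2) (u v : ℤ) : ℝ :=
  (1 / 4 : ℝ) * det2 (α (u + 1) - α u) (β (v + 1) - β v)

/-- `α₁(u)` is discretely parallel to `β(v)`. -/
def dpAB (α β : ℤ → R2) (u v : ℤ) : Prop :=
  0 < det2 (α (u + 1) - α u) (β (v + 1) - β v) * det2 (α (u + 1) - α u) (β (v - 1) - β v)

/-- `β₂(v)` is discretely parallel to `α(u)`. -/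
def dpBA (α β : ℤ → R2) (u v : ℤ) : Prop :=
  0 < det2 (β (v + 1) - β v) (α (u + 1) - α u) * det2 (β (v + 1) - β v) (α (u - 1) - α u)

/-- Genericity assumption (G1). -/
def G1 (α β : ℤ → R2) : Prop :=
  ∀ u v : ℤ,
    LinearIndependent ℝ ![β (v - 1) - α u, β (v + 1) - α u] ∧
    ∃ s t : ℝ, 0 < s ∧ 0 < t ∧
      β v - α u = s • (β (v - 1) - α u) + t • (β (v + 1) - α u)

/-- Genericity assumption (G2). -/
def G2 (α β : ℤ → R2) : Prop :=
  ∀ u v : ℤ,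
    LinearIndependent ℝ ![α (u - 1) - β v, α (u + 1) - β v] ∧
    ∃ s t : ℝ, 0 < s ∧ 0 < t ∧
      α u - β v = s • (α (u - 1) - β v) + t • (α (u + 1) - β v)

/-- Genericity assumption (G3): no edge of `α` is parallel to an edge of `β`. -/
def G3 (α β : ℤ → R2) : Prop :=
  ∀ u v : ℤ, det2 (α (u + 1) - α u) (β (v + 1) - β v) ≠ 0

/-- Euclidean dot product on `ℝ³`. -/
def dot3 (a b : R3) : ℝ := a.1 * b.1 + a.2.1 * b.2.1 + a.2.2 * b.2.2

/-- Projection of `ℝ³` onto the first two coordinates. -/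
def projxy (p : R3) : R2 := (p.1, p.2.1)

/-- the discrete Cayley surface. -/
theorem stmt13 (a : ℝ) (q : ℤ → ℤ → R3)
    (h11 : ∀ u v : ℤ, D11 q u v = a • D2 q u v)
    (h22 : ∀ u v : ℤ, D22 q u v = 0)
    (h12 : ∀ u v : ℤ, D12 q u v = e3)
    (i00 : q 0 0 = ((0 : ℝ), (0 : ℝ), (0 : ℝ)))
    (i01 : q 0 1 = ((0 : ℝ), (1 : ℝ), (0 : ℝ)))
    (i10 : q 1 0 = ((1 : ℝ), (0 : ℝ), (0 : ℝ))) :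
    ∀ u v : ℤ,
      q u v = ((u : ℝ), (v : ℝ) + a * (u : ℝ) * ((u : ℝ) - 1) / 2,
        (u : ℝ) * (v : ℝ) + a * (u : ℝ) * ((u : ℝ) ^ 2 - 1) / 6) := by
  have ext3 : ∀ {x y : R3}, x.1 = y.1 → x.2.1 = y.2.1 → x.2.2 = y.2.2 → x = y := by
    rintro ⟨x1, x2, x3⟩ ⟨y1, y2, y3⟩ h1 h2 h3
    simp_all
  -- D2 step in u
  have hstep12 : ∀ u v : ℤ, D2 q (u + 1) v = D2 q u v + e3 := by
    intro u v
    have h := h12 u v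
    simp only [D12] at h
    simp only [D2]
    linear_combination (norm := abel_nf) h
  -- D2 constant in v
  have hstep22 : ∀ u v : ℤ, D2 q u v = D2 q u (v - 1) := by
    intro u v
    have h := h22 u v
    simp only [D22] at h
    rw [two_smul] at h
    simp only [D2]
    rw [show v - 1 + 1 = v from by ring]
    linear_combination (norm := abel_nf) h
  have hAv : ∀ u v : ℤ, D2 q u v = D2 q u 0 := by
    intro u v
    induction v using Int.induction_on with
    | zero => rfl
    | succ k ih =>
      have h := hstep22 u ((k : ℤ) + 1)
      rw [show (k : ℤ) + 1 - 1 = k from by ring] at h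
      rw [h, ih]
    | pred k ih =>
      have h := hstep22 u (-(k : ℤ))
      rw [show -(k : ℤ) - 1 = -k - 1 from by ring] at h
      rw [← h, ih]
  -- D2 q u 0 = (0, 1, u)
  have hB : ∀ u : ℤ, D2 q u 0 = ((0 : ℝ), (1 : ℝ), (u : ℝ)) := by
    intro u
    induction u using Int.induction_on with
    | zero =>
      simp only [D2, zero_add, i00, i01]
      exact ext3 (by norm_num) (by norm_num) (by norm_num)
    | succ k ih =>
      rw [hstep12 k 0, ih]
      refine ext3 ?_ ?_ ?_ <;> simp [e3] <;> push_cast <;> ring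
    | pred k ih =>
      have h := hstep12 (-(k : ℤ) - 1) 0
      rw [show -(k : ℤ) - 1 + 1 = -k from by ring, ih] at h
      have h' : D2 q (-(k : ℤ) - 1) 0 = ((0:ℝ), (1:ℝ), (-(k:ℝ))) - e3 := by
        rw [eq_sub_iff_add_eq, ← h]
        exact ext3 rfl rfl (by push_cast; ring)
      rw [h']
      refine ext3 ?_ ?_ ?_ <;> simp [e3] <;> push_cast <;> ring
  have hA : ∀ u v : ℤ, D2 q u v = ((0 : ℝ), (1 : ℝ), (u : ℝ)) :=
    fun u v => (hAv u v).trans (hB u)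
  -- the u-recursion for q · 0, forward and backward
  have stepF : ∀ u : ℤ, q (u + 1) 0 =
      (2 : ℝ) • q u 0 - q (u - 1) 0 + a • ((0:ℝ), (1:ℝ), (u:ℝ)) := by
    intro u
    have h := h11 u 0
    rw [hA u 0] at h
    simp only [D11] at h
    linear_combination (norm := abel_nf) h
  have stepB : ∀ u : ℤ, q (u - 1) 0 =
      (2 : ℝ) • q u 0 - q (u + 1) 0 + a • ((0:ℝ), (1:ℝ), (u:ℝ)) := by
    intro u
    have h := stepF u
    linear_combination (norm := abel_nf) h
  -- q u 0 = F u by two-step induction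
  have hC : ∀ u : ℤ, q u 0 = ((u : ℝ), a * (u : ℝ) * ((u : ℝ) - 1) / 2,
        a * (u : ℝ) * ((u : ℝ) ^ 2 - 1) / 6) ∧
      q (u + 1) 0 = (((u : ℝ) + 1), a * ((u : ℝ) + 1) * ((u : ℝ) + 1 - 1) / 2,
        a * ((u : ℝ) + 1) * (((u : ℝ) + 1) ^ 2 - 1) / 6) := by
    intro u
    induction u using Int.induction_on with
    | zero =>
      refine ⟨?_, ?_⟩
      · rw [i00]; exact ext3 (by norm_num) (by norm_num) (by norm_num)
      · rw [show (0 : ℤ) + 1 = 1 from rfl, i10]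
        exact ext3 (by norm_num) (by norm_num) (by norm_num)
    | succ k ih =>
      refine ⟨?_, ?_⟩
      · rw [ih.2]
        refine ext3 ?_ ?_ ?_ <;> push_cast <;> ring
      · have h := stepF ((k : ℤ) + 1)
        rw [show (k : ℤ) + 1 - 1 = k from by ring, ih.1, ih.2] at h
        rw [h]
        refine ext3 ?_ ?_ ?_ <;>
          simp [Prod.smul_mk, smul_eq_mul, Prod.ext_iff] <;> push_cast <;> ring
    | pred k ih =>
      refine ⟨?_, ?_⟩
      · have h := stepB (-(k : ℤ))
        rw [ih.1, ih.2] at h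
        rw [h]
        refine ext3 ?_ ?_ ?_ <;>
          simp [Prod.smul_mk, smul_eq_mul, Prod.ext_iff] <;> push_cast <;> ring
      · rw [show -(k : ℤ) - 1 + 1 = -k from by ring, ih.1]
        refine ext3 ?_ ?_ ?_ <;> push_cast <;> ring
  -- q u v = q u 0 + v • (0,1,u)
  have hD : ∀ u v : ℤ, q u v = q u 0 + (v : ℝ) • ((0:ℝ), (1:ℝ), (u:ℝ)) := by
    intro u v
    induction v using Int.induction_on with
    | zero => simp
    | succ k ih =>
      have h : q u ((k : ℤ) + 1) = q u k + D2 q u k := by simp [D2]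
      rw [h, ih, hA]
      push_cast
      module
    | pred k ih =>
      have h : q u (-(k : ℤ) - 1) = q u (-k) - D2 q u (-k - 1) := by
        simp only [D2, show -(k : ℤ) - 1 + 1 = -k from by ring]
        abel
      rw [h, ih, hA]
      push_cast
      module
  intro u v
  rw [hD u v, (hC u).1]
  refine ext3 ?_ ?_ ?_ <;>
    simp [Prod.smul_mk, smul_eq_mul, Prod.ext_iff] <;> ring
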